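/- Let G be a group (written multiplicatively) and f : G → ℂ. If there exists ε > 0 such that |f(x*y) − f(x)·f(y)| ≤ ε for all x, y ∈ G, then either f is bounded, or f is a homomorphism into the multiplicative monoid of ℂ, i.e. f(x*y) = f(x)·f(y) for all x, y. -/

import Mathlib

theorem stmt_1 (G : Type*) [Group G] (f : G → ℂ)
    (ε : ℝ) (hε : 0 < ε) (h : ∀ x y : G, ‖f (x * y) - f x * f y‖ ≤ ε) :
    (∃ M : ℝ, ∀ x : G, ‖f x‖ ≤ M) ∨ (∀ x y : G, f (x * y) = f x * f y) := by
  by_cases hb : ∃ M : ℝ, ∀ x : G, ‖f x‖ ≤ M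
  · exact Or.inl hb
  · right
    push_neg at hb
    intro x y
    rw [← sub_eq_zero]
    by_contra hne
    have habs : 0 < ‖f (x * y) - f x * f y‖ := by
      simpa [norm_pos_iff] using hne
    set D := ‖f (x * y) - f x * f y‖ with hD
    obtain ⟨z, hz⟩ := hb (max 0 ((2 * ε + ‖f x‖ * ε) / D))
    have hz0 : 0 < ‖f z‖ := lt_of_le_of_lt (le_max_left _ _) hz
    have key : D * ‖f z‖ ≤ 2 * ε + ‖f x‖ * ε := by
      have h1 := h (x * y) z
      have h2 := h x (y * z)
      have h3 := h y z
      have e1 : f (x * y) * f z - f x * f y * f z =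
          (f (x * y * z) - f x * f (y * z))
          + -(f (x * y * z) - f (x * y) * f z)
          + f x * (f (y * z) - f y * f z) := by ring
      calc D * ‖f z‖
          = ‖f (x * y) * f z - f x * f y * f z‖ := by
            rw [hD, ← norm_mul, sub_mul]
        _ ≤ ‖f (x * y * z) - f x * f (y * z)‖
            + ‖f (x * y * z) - f (x * y) * f z‖
            + ‖f x * (f (y * z) - f y * f z)‖ := by
            rw [e1]
            refine le_trans (norm_add_le _ _) ?_
            refine add_le_add (le_trans (norm_add_le _ _) ?_) le_rfl
            rw [norm_neg]
        _ ≤ ε + ε + ‖f x‖ * ε :=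
            add_le_add (add_le_add (by simpa [mul_assoc] using h2) h1)
              (by rw [norm_mul]
                  exact mul_le_mul_of_nonneg_left h3 (norm_nonneg _))
        _ = 2 * ε + ‖f x‖ * ε := by ring
    have hlt : (2 * ε + ‖f x‖ * ε) / D < ‖f z‖ :=
      lt_of_le_of_lt (le_max_right _ _) hz
    rw [div_lt_iff₀ habs] at hlt
    nlinarith [key, hlt]
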